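/- Let φ : [0, η) → [0, ∞) be concave, continuously differentiable on (0, η) with φ' > 0 and φ(0) = 0, let Φ be a primitive of −(φ')² on (0, η), and suppose lim_{t→0⁺} Φ(t) ∈ ℝ. Let (rₖ) be a nonnegative nonincreasing sequence with r₀ < η, (bₖ) positive with Σ bₖ = ∞, and m > 0 such that whenever rₖ > 0 and r_{k+1} > 0 one has φ'(rₖ)²(rₖ − r_{k+1}) ≥ m b_{k+1}. Then rₖ = 0 for some k ∈ ℕ. -/
import Mathlib


theorem stmt_5 (η : ℝ) (hη : 0 < η) (φ φ' Φ : ℝ → ℝ)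
    (hconc : ConcaveOn ℝ (Set.Ico 0 η) φ) (hφ0 : φ 0 = 0)
    (hderiv : ∀ t ∈ Set.Ioo 0 η, HasDerivAt φ (φ' t) t)
    (hφ'pos : ∀ t ∈ Set.Ioo 0 η, 0 < φ' t)
    (hφ'cont : ContinuousOn φ' (Set.Ioo 0 η))
    (hΦ : ∀ t ∈ Set.Ioo 0 η, HasDerivAt Φ (-(φ' t) ^ 2) t)
    (hΦlim : ∃ ℓ : ℝ, Filter.Tendsto Φ (nhdsWithin 0 (Set.Ioi 0)) (nhds ℓ))
    (r b : ℕ → ℝ) (m : ℝ) (hm : 0 < m)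
    (hrnonneg : ∀ k, 0 ≤ r k) (hrmono : ∀ k, r (k + 1) ≤ r k) (hr0 : r 0 < η)
    (hb : ∀ k, 0 < b k) (hbsum : ¬ Summable b)
    (hineq : ∀ k, 0 < r k → 0 < r (k + 1) →
      (φ' (r k)) ^ 2 * (r k - r (k + 1)) ≥ m * b (k + 1)) :
    ∃ k, r k = 0 := by
  by_contra h
  push_neg at h
  obtain ⟨ℓ, hℓ⟩ := hΦlim
  have hrpos : ∀ k, 0 < r k := fun k => (hrnonneg k).lt_of_ne' (h k)
  have hra : Antitone r := antitone_nat_of_succ_le hrmono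
  have hrmem : ∀ k, r k ∈ Set.Ioo 0 η :=
    fun k => ⟨hrpos k, lt_of_le_of_lt (hra (Nat.zero_le k)) hr0⟩
  -- φ' is antitone on Ioo 0 η
  have hconc' : ConcaveOn ℝ (Set.Ioo 0 η) φ :=
    hconc.subset Set.Ioo_subset_Ico_self (convex_Ioo 0 η)
  have hanti : AntitoneOn φ' (Set.Ioo 0 η) := by
    have := hconc'.antitoneOn_deriv (fun x hx => (hderiv x hx).differentiableAt)
    intro x hx y hy hxy
    have hx' := (hderiv x hx).deriv
    have hy' := (hderiv y hy).deriv
    rw [← hx', ← hy']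
    exact this hx hy hxy
  -- Φ is antitone on Ioo 0 η
  have hΦcont : ContinuousOn Φ (Set.Ioo 0 η) :=
    fun x hx => (hΦ x hx).continuousAt.continuousWithinAt
  have hΦanti : AntitoneOn Φ (Set.Ioo 0 η) := by
    apply antitoneOn_of_deriv_nonpos (convex_Ioo 0 η) hΦcont
    · intro x hx
      rw [interior_Ioo] at hx
      exact (hΦ x hx).differentiableAt.differentiableWithinAt
    · intro x hx
      rw [interior_Ioo] at hx
      rw [(hΦ x hx).deriv]
      have := hφ'pos x hx
      nlinarith
  -- Φ ≤ ℓ on Ioo 0 η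
  have hΦle : ∀ t ∈ Set.Ioo 0 η, Φ t ≤ ℓ := by
    intro t ht
    refine ge_of_tendsto hℓ ?_
    filter_upwards [self_mem_nhdsWithin,
      Ioo_mem_nhdsGT_of_mem (Set.mem_Ico.2 ⟨le_refl (0:ℝ), ht.1⟩)] with s hs hs'
    exact hΦanti ⟨hs, hs'.2.trans ht.2⟩ ht (le_of_lt hs'.2)
  -- key step
  have key : ∀ k, Φ (r k) + m * b (k + 1) ≤ Φ (r (k + 1)) := by
    intro k
    have hiq := hineq k (hrpos k) (hrpos (k + 1))
    have hlt : r (k + 1) < r k := by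
      rcases lt_or_eq_of_le (hrmono k) with h' | h'
      · exact h'
      · exfalso
        rw [h'] at hiq
        nlinarith [hb (k + 1), hiq]
    have hsub : Set.Icc (r (k+1)) (r k) ⊆ Set.Ioo 0 η := fun x hx =>
      ⟨lt_of_lt_of_le (hrpos (k+1)) hx.1, lt_of_le_of_lt hx.2 (hrmem k).2⟩
    have hsub' : Set.Ioo (r (k+1)) (r k) ⊆ Set.Ioo 0 η :=
      (Set.Ioo_subset_Icc_self).trans hsub
    obtain ⟨c, hc, hceq⟩ := exists_hasDerivAt_eq_slope Φ (fun t => -(φ' t)^2) hlt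
      (hΦcont.mono hsub) (fun x hx => hΦ x (hsub' hx))
    have hcmem := hsub' hc
    have hφ'c : φ' (r k) ≤ φ' c := hanti hcmem (hrmem k) (le_of_lt hc.2)
    have hne : r k - r (k+1) ≠ 0 := sub_ne_zero.2 hlt.ne'
    have h1 : Φ (r k) - Φ (r (k+1)) = -(φ' c)^2 * (r k - r (k+1)) := by
      have hh := hceq
      rw [eq_div_iff hne] at hh
      linarith [hh]
    have h2 : (φ' (r k))^2 ≤ (φ' c)^2 := by
      have := hφ'pos (r k) (hrmem k)
      nlinarith
    nlinarith [mul_le_mul_of_nonneg_right h2 (le_of_lt (sub_pos.2 hlt))]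
  -- sum up
  have hsum : ∀ n, Φ (r 0) + m * ∑ i ∈ Finset.range n, b (i + 1) ≤ Φ (r n) := by
    intro n
    induction n with
    | zero => simp
    | succ n ih =>
      have := key n
      rw [Finset.sum_range_succ]
      linarith
  -- partial sums tend to infinity
  have hb' : ∀ i, 0 ≤ b (i + 1) := fun i => (hb (i + 1)).le
  have htend : Filter.Tendsto (fun n => ∑ i ∈ Finset.range n, b (i + 1))
      Filter.atTop Filter.atTop := by
    have hns : ¬ Summable (fun i => b (i + 1)) := by
      intro hs
      exact hbsum ((summable_nat_add_iff 1).mp hs)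
    exact (not_summable_iff_tendsto_nat_atTop_of_nonneg hb').mp hns
  have : Filter.Tendsto (fun n => Φ (r 0) + m * ∑ i ∈ Finset.range n, b (i + 1))
      Filter.atTop Filter.atTop :=
    Filter.tendsto_atTop_add_const_left _ _ (htend.const_mul_atTop hm)
  obtain ⟨n, hn⟩ := (this.eventually_gt_atTop ℓ).exists
  have := hsum n
  have := hΦle (r n) (hrmem n)
  linarith
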